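/- Let G be a graph whose vertices are labeled w_1,...,w_h, z_1,...,z_h satisfying conditions (i)-(iv) as above. Then in G_k, with a_i corresponding to w_{m,p} and b_j corresponding to z_{q,k+1-r}: if {b_i,a_j} and {b_j,a_l} are edges of G_k with i,j,l distinct, then {b_i,a_l} is an edge of G_k. -/

import Mathlib

/-- The graph `G_k`. -/
def graphPower {V : Type*} (G : SimpleGraph V) (k : ℕ) : SimpleGraph (V × Fin k) where
  Adj a b := G.Adj a.1 b.1 ∧ a.2.val + b.2.val + 2 ≤ k + 1
  symm := ⟨by rintro a b ⟨h1, h2⟩; exact ⟨h1.symm, by omega⟩⟩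
  loopless := ⟨by rintro a ⟨h1, _⟩; exact G.irrefl h1⟩

/-- Vertices of `G` are `w_1,…,w_h` (encoded `Sum.inl`) and `z_1,…,z_h` (encoded
`Sum.inr`).  Assuming conditions (i)–(iv), the following holds in `G_k`: for
pairwise distinct labels, if `{b_i, a_j}` and `{b_j, a_l}` are edges of `G_k`, then
so is `{b_i, a_l}`, where `a_j` corresponds to `w_{q,r}` and `b_i = z_{m,k+1-p}`,
`b_j = z_{q,k+1-r}` (0-indexed: copies `k-1-p`, `k-1-r`). -/
theorem stmt4 (h k : ℕ) (G : SimpleGraph (Fin h ⊕ Fin h))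
    -- (i) `{w_1,…,w_h}` is a vertex cover and `{z_1,…,z_h}` is independent
    (hcov : ∀ u v, G.Adj u v → (∃ i, u = Sum.inl i) ∨ (∃ i, v = Sum.inl i))
    (hind : ∀ i j : Fin h, ¬ G.Adj (Sum.inr i) (Sum.inr j))
    -- (ii) `{w_i, z_i} ∈ E(G)`
    (hperf : ∀ i : Fin h, G.Adj (Sum.inl i) (Sum.inr i))
    -- (iii)
    (hiii : ∀ i j l : Fin h, i ≠ j → j ≠ l → i ≠ l →
      ∀ y : Fin h ⊕ Fin h, (y = Sum.inl i ∨ y = Sum.inr i) →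
      G.Adj y (Sum.inl j) → G.Adj (Sum.inr j) (Sum.inl l) → G.Adj y (Sum.inl l))
    -- (iv)
    (hiv : ∀ i j : Fin h, G.Adj (Sum.inl i) (Sum.inr j) → ¬ G.Adj (Sum.inl i) (Sum.inl j))
    (m q s : Fin h) (p r t : Fin k)
    (hd1 : (m, p) ≠ (q, r)) (hd2 : (q, r) ≠ (s, t)) (hd3 : (m, p) ≠ (s, t))
    (e1 : (graphPower G k).Adj
      (Sum.inr m, ⟨k - 1 - p.val, by have := p.2; omega⟩) (Sum.inl q, r))
    (e2 : (graphPower G k).Adj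
      (Sum.inr q, ⟨k - 1 - r.val, by have := r.2; omega⟩) (Sum.inl s, t)) :
    (graphPower G k).Adj
      (Sum.inr m, ⟨k - 1 - p.val, by have := p.2; omega⟩) (Sum.inl s, t) := by
  obtain ⟨ha1, hb1⟩ := e1
  obtain ⟨ha2, hb2⟩ := e2
  refine ⟨?_, by simp only at hb1 hb2 ⊢; omega⟩
  by_cases hms : m = s
  · subst hms; exact (hperf m).symm
  by_cases hmq : m = q
  · subst hmq; exact ha2
  by_cases hqs : q = s
  · subst hqs; exact ha1
  exact hiii m q s hmq hqs hms (Sum.inr m) (Or.inr rfl) ha1 ha2
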